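/- Let δ ∈ (0,1) and let (a_k)_{k≥1} be nonnegative reals with Σ_{k≥1} a_k < ∞. Set V := Σ_{k≥1} a_k and suppose a_k ≤ k·δ·V for every k ≥ 1. Then V ≤ 3·√δ·Σ_{k≥1} k·a_k. -/

import Mathlib

set_option maxHeartbeats 1000000

private lemma gauss_aux (n : ℕ) : ∑ k ∈ Finset.range n, ((k:ℝ)+1) = n*(n+1)/2 := by
  induction n with
  | zero => simp
  | succ p ih => rw [Finset.sum_range_succ, ih]; push_cast; ring

open ENNReal

/-- Combinatorial core of the L²-OSSS inequality with square-root revealment: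
if nonnegative summable weights `a k` (for `k ≥ 1`) with total mass `V` satisfy
`a k ≤ k·δ·V`, then `V ≤ 3·√δ·∑ k·a k`. -/
theorem stmt_2 (δ : ℝ) (hδ : δ ∈ Set.Ioo (0 : ℝ) 1) (a : ℕ → ℝ≥0∞)
    (hfin : (∑' k, a (k + 1)) ≠ ⊤)
    (V : ℝ≥0∞) (hV : V = ∑' k, a (k + 1))
    (hbd : ∀ k : ℕ, 1 ≤ k → a k ≤ (k : ℝ≥0∞) * ENNReal.ofReal δ * V) :
    V ≤ ENNReal.ofReal (3 * Real.sqrt δ) * ∑' (k : ℕ), ((k : ℝ≥0∞) + 1) * a (k + 1) := by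
  obtain ⟨hδ0, hδ1⟩ := hδ
  set s := Real.sqrt δ with hs
  have hs0 : 0 < s := Real.sqrt_pos.2 hδ0
  have hs1 : s < 1 := by
    rw [hs, show (1:ℝ) = Real.sqrt 1 by simp]
    exact Real.sqrt_lt_sqrt hδ0.le hδ1
  have hssq : s * s = δ := Real.mul_self_sqrt hδ0.le
  set S := ∑' (k : ℕ), ((k : ℝ≥0∞) + 1) * a (k + 1) with hS
  have hVS : V ≤ S := by
    rw [hV, hS]
    refine ENNReal.tsum_le_tsum fun k => ?_
    conv_lhs => rw [← one_mul (a (k+1))]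
    gcongr
    simp
  by_cases hcase : (1:ℝ)/3 ≤ s
  · calc V ≤ S := hVS
      _ = 1 * S := (one_mul S).symm
      _ ≤ ENNReal.ofReal (3 * s) * S := by
          gcongr
          rw [show (1:ℝ≥0∞) = ENNReal.ofReal 1 by simp]
          exact ENNReal.ofReal_le_ofReal (by linarith)
  · push_neg at hcase
    by_cases hStop : S = ⊤
    · rw [hStop, ENNReal.mul_top (by rw [ne_eq, ENNReal.ofReal_eq_zero]; push_neg; positivity)]
      exact le_top
    -- define m
    have hceil : 1 ≤ ⌈1/s⌉₊ := Nat.one_le_ceil_iff.2 (by positivity)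
    obtain ⟨m, hm1⟩ : ∃ m : ℕ, m + 1 = ⌈1/s⌉₊ := ⟨⌈1/s⌉₊ - 1, by omega⟩
    have hmlt : (m : ℝ) < 1/s := by
      rw [← Nat.lt_ceil]; omega
    have hmge : (1:ℝ)/s ≤ (m:ℝ) + 1 := by
      have h := Nat.le_ceil (1/s)
      rw [← hm1] at h; push_cast at h; linarith
    -- split the sum
    have hsplit : (∑ k ∈ Finset.range m, a (k+1)) + ∑' k, a (k + m + 1) = V := by
      rw [hV]
      have := Summable.sum_add_tsum_nat_add' (f := fun k => a (k+1)) (k := m) ENNReal.summable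
      simpa [add_assoc, add_comm, add_left_comm] using this
    -- finite part bound
    have hA : (∑ k ∈ Finset.range m, a (k+1)) ≤ ENNReal.ofReal ((1+s)/2) * V := by
      calc (∑ k ∈ Finset.range m, a (k+1))
          ≤ ∑ k ∈ Finset.range m, ((k+1 : ℕ) : ℝ≥0∞) * ENNReal.ofReal δ * V := by
            refine Finset.sum_le_sum fun k _ => ?_
            exact hbd (k+1) (by omega)
        _ = (∑ k ∈ Finset.range m, ((k+1 : ℕ) : ℝ≥0∞)) * (ENNReal.ofReal δ * V) := by
            rw [Finset.sum_mul]; simp [mul_assoc]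
        _ ≤ ENNReal.ofReal ((1+s)/2) * V := by
            have hsum : (∑ k ∈ Finset.range m, ((k+1 : ℕ) : ℝ≥0∞))
                = ENNReal.ofReal (∑ k ∈ Finset.range m, ((k:ℝ)+1)) := by
              rw [ENNReal.ofReal_sum_of_nonneg (fun k _ => by positivity)]
              refine Finset.sum_congr rfl fun k _ => ?_
              rw [ENNReal.ofReal_add (by positivity) zero_le_one]
              simp [ENNReal.ofReal_natCast]
            rw [hsum, gauss_aux, ← mul_assoc, ← ENNReal.ofReal_mul (by positivity)]
            gcongr
            have h1 : (m:ℝ) * s ≤ 1 := by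
              have := (lt_div_iff₀ hs0).1 hmlt
              linarith
            have h2 : ((m:ℝ)+1) * s ≤ 1 + s := by
              have h2' : (m:ℝ)+1 ≤ 1/s + 1 := by
                have := hmlt.le; linarith
              have h5 := mul_le_mul_of_nonneg_right h2' hs0.le
              have h4 : (1/s+1)*s = 1+s := by field_simp
              rw [h4] at h5
              linarith
            have h3 : ((m:ℝ)*s) * (((m:ℝ)+1)*s) ≤ 1 * (1+s) :=
              mul_le_mul h1 h2 (by positivity) (by norm_num)
            nlinarith [h3, hssq]
    -- tail bound
    have hT : ((m:ℝ≥0∞) + 1) * (∑' k, a (k + m + 1)) ≤ S := by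
      rw [← ENNReal.tsum_mul_left]
      calc (∑' k, ((m:ℝ≥0∞)+1) * a (k + m + 1))
          ≤ ∑' k, (((k + m : ℕ):ℝ≥0∞) + 1) * a ((k + m) + 1) := by
            refine ENNReal.tsum_le_tsum fun k => ?_
            exact mul_le_mul' (by push_cast; exact add_le_add_left le_add_self 1) le_rfl
        _ ≤ S := by
            rw [hS]
            exact tsum_comp_le_tsum_of_injective (f := fun k => k + m)
              (add_left_injective m) (fun k => ((k:ℝ≥0∞)+1) * a (k+1))
    have hmne : ((m:ℝ≥0∞) + 1) ≠ 0 := by simp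
    have hmnetop : ((m:ℝ≥0∞) + 1) ≠ ⊤ := by simp
    have hT' : (∑' k, a (k + m + 1)) ≤ ENNReal.ofReal s * S := by
      have h1 : (∑' k, a (k + m + 1)) ≤ S / ((m:ℝ≥0∞) + 1) :=
        ENNReal.le_div_iff_mul_le (Or.inl hmne) (Or.inl hmnetop) |>.2
          (by rw [mul_comm]; exact hT)
      refine h1.trans ?_
      rw [ENNReal.div_eq_inv_mul]
      gcongr
      have : ((m:ℝ≥0∞) + 1) = ENNReal.ofReal ((m:ℝ) + 1) := by
        rw [ENNReal.ofReal_add (by positivity) zero_le_one]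
        simp [ENNReal.ofReal_natCast]
      rw [this, ← ENNReal.ofReal_inv_of_pos (by positivity)]
      apply ENNReal.ofReal_le_ofReal
      rw [inv_le_comm₀ (by positivity) hs0, ← one_div]
      exact hmge
    -- combine
    have hVfin : V ≠ ⊤ := by rw [hV]; exact hfin
    have hmain : V ≤ ENNReal.ofReal ((1+s)/2) * V + ENNReal.ofReal s * S := by
      calc V = (∑ k ∈ Finset.range m, a (k+1)) + ∑' k, a (k + m + 1) := hsplit.symm
        _ ≤ ENNReal.ofReal ((1+s)/2) * V + ENNReal.ofReal s * S := add_le_add hA hT'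
    set c := ENNReal.ofReal ((1+s)/2) with hc
    have hclt1 : c < 1 := by
      rw [hc, show (1:ℝ≥0∞) = ENNReal.ofReal 1 by simp]
      exact ENNReal.ofReal_lt_ofReal_iff (by norm_num) |>.2 (by linarith)
    have honec : (1 : ℝ≥0∞) - c = ENNReal.ofReal ((1-s)/2) := by
      rw [hc, show (1:ℝ≥0∞) = ENNReal.ofReal 1 by simp,
        ← ENNReal.ofReal_sub 1 (by linarith : (0:ℝ) ≤ (1+s)/2)]
      ring_nf
    have hkey : (1 - c) * V ≤ ENNReal.ofReal s * S := by
      rw [ENNReal.sub_mul (fun _ _ => hVfin), one_mul]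
      exact tsub_le_iff_right.2 (by rw [add_comm]; exact hmain)
    have hne0 : (1:ℝ≥0∞) - c ≠ 0 := by
      rw [honec]; simp only [ne_eq, ENNReal.ofReal_eq_zero, not_le]; linarith
    have hnetop : (1:ℝ≥0∞) - c ≠ ⊤ := by rw [honec]; exact ENNReal.ofReal_ne_top
    have hfinal : (1 - c) * V ≤ (1 - c) * (ENNReal.ofReal (3 * s) * S) := by
      refine hkey.trans ?_
      rw [honec, ← mul_assoc, ← ENNReal.ofReal_mul (by linarith : (0:ℝ) ≤ (1-s)/2)]
      gcongr
      nlinarith [hs0, hcase]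
    exact (ENNReal.mul_le_mul_iff_right hne0 hnetop).1 hfinal
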